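/- Let c ∈ ℝ³ with 0 < ‖c‖ < 2π and x ∈ ℝ³. Then the 4×4 matrix exponential of the block matrix A = [[skew(c), F(c, x)], [0, 0]] (upper-left 3×3 block skew(c), upper-right 3×1 block the column vector F(c,x), bottom row all zeros) equals the block matrix [[exp(skew(c)), x], [0, 1]] (upper-left block the 3×3 matrix exponential of skew(c), upper-right block the column vector x, bottom row (0,0,0,1)). In other words, the formula F(c,x) recovers exactly the spatial coefficients c⁽¹⁾ of the logarithm of the rigid body motion (x, exp(skew(c))) ∈ SE(3) in its homogeneous 4×4 matrix representation. -/

import Mathlib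

open Matrix

/-- The skew-symmetric matrix associated to a vector `c ∈ ℝ³`. -/
def skew (c : Fin 3 → ℝ) : Matrix (Fin 3) (Fin 3) ℝ :=
  !![0, -c 2, c 1; c 2, 0, -c 0; -c 1, c 0, 0]

/-- The Euclidean norm of a vector in `ℝ³`. -/
noncomputable def enorm3 (c : Fin 3 → ℝ) : ℝ :=
  Real.sqrt (c 0 ^ 2 + c 1 ^ 2 + c 2 ^ 2)

/-- Equation (11) of the paper: the spatial coefficients of the logarithm on `SE(3)`,
`F(c,x) = (I − (1/2)·skew c + q⁻²·(1 − (q/2)·cot(q/2))·(skew c)²) x` with `q = ‖c‖`. -/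
noncomputable def F (c x : Fin 3 → ℝ) : Fin 3 → ℝ :=
  ((1 : Matrix (Fin 3) (Fin 3) ℝ) - (1 / 2 : ℝ) • skew c +
      ((enorm3 c)⁻¹ ^ 2 *
        (1 - enorm3 c / 2 * (Real.cos (enorm3 c / 2) / Real.sin (enorm3 c / 2)))) •
        (skew c * skew c)).mulVec x

section aux

variable {q : ℝ}

lemma trig1 (h0 : 0 < q) (h2 : q < 2*Real.pi) :
    ((1 - Real.cos q)/q^2) - 1/2
      - ((1 - Real.cos q)/q^2) * (q⁻¹^2 * (1 - q/2 * (Real.cos (q/2)/Real.sin (q/2)))) * q^2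
      + (q - Real.sin q)/q^3 * q^2 / 2 = 0 := by
  have hs : Real.sin (q/2) ≠ 0 := ne_of_gt (Real.sin_pos_of_pos_of_lt_pi (by linarith)
    (by linarith [Real.pi_pos]))
  have hq : q ≠ 0 := ne_of_gt h0
  have h : 2 * (q/2) = q := by ring
  have hcos := Real.cos_two_mul (q/2); rw [h] at hcos
  have hsin := Real.sin_two_mul (q/2); rw [h] at hsin
  have hpy := Real.sin_sq_add_cos_sq (q/2)
  rw [hcos, hsin]
  field_simp
  linear_combination (-(2*q*Real.cos (q/2))) * hpy

lemma trig2 (h0 : 0 < q) (h2 : q < 2*Real.pi) :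
    (q⁻¹^2 * (1 - q/2 * (Real.cos (q/2)/Real.sin (q/2)))) - ((1 - Real.cos q)/q^2)/2
      + (q - Real.sin q)/q^3
      - (q - Real.sin q)/q^3 * (q⁻¹^2 * (1 - q/2 * (Real.cos (q/2)/Real.sin (q/2)))) * q^2 = 0 := by
  have hs : Real.sin (q/2) ≠ 0 := ne_of_gt (Real.sin_pos_of_pos_of_lt_pi (by linarith)
    (by linarith [Real.pi_pos]))
  have hq : q ≠ 0 := ne_of_gt h0
  have h : 2 * (q/2) = q := by ring
  have hcos := Real.cos_two_mul (q/2); rw [h] at hcos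
  have hsin := Real.sin_two_mul (q/2); rw [h] at hsin
  have hpy := Real.sin_sq_add_cos_sq (q/2)
  rw [hcos, hsin]
  field_simp
  ring_nf

/-- coefficient series for `(1 - cos q)/q²`. -/
lemma hasSum_alpha (hq : q ≠ 0) :
    HasSum (fun k : ℕ => (-1)^k * q^(2*k) / (Nat.factorial (2*k+2) : ℝ)) ((1 - Real.cos q)/q^2) := by
  have h := (hasSum_nat_add_iff' (f := fun n : ℕ => (-1)^n * q^(2*n) / (Nat.factorial (2*n) : ℝ)) 1).mpr
    (Real.hasSum_cos q)
  have h2 := h.mul_left (-(q^2)⁻¹)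
  have hfun : (fun n : ℕ => (-(q^2)⁻¹) * ((-1)^(n+1) * q^(2*(n+1)) / (Nat.factorial (2*(n+1)) : ℝ)))
      = fun k : ℕ => (-1)^k * q^(2*k) / (Nat.factorial (2*k+2) : ℝ) := by
    funext n
    have e : 2*(n+1) = 2*n+2 := by ring
    rw [e, pow_succ, pow_add]
    field_simp
    ring
  rw [hfun] at h2
  convert h2 using 1
  · rfl
  simp [Finset.range_one]
  field_simp
  ring

/-- coefficient series for `(q - sin q)/q³`. -/
lemma hasSum_gamma (hq : q ≠ 0) :
    HasSum (fun k : ℕ => (-1)^k * q^(2*k) / (Nat.factorial (2*k+3) : ℝ)) ((q - Real.sin q)/q^3) := by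
  have h := (hasSum_nat_add_iff' (f := fun n : ℕ => (-1)^n * q^(2*n+1) / (Nat.factorial (2*n+1) : ℝ)) 1).mpr
    (Real.hasSum_sin q)
  have h2 := h.mul_left (-(q^3)⁻¹)
  have hfun : (fun n : ℕ => (-(q^3)⁻¹) * ((-1)^(n+1) * q^(2*(n+1)+1) / (Nat.factorial (2*(n+1)+1) : ℝ)))
      = fun k : ℕ => (-1)^k * q^(2*k) / (Nat.factorial (2*k+3) : ℝ) := by
    funext n
    have e : 2*(n+1)+1 = 2*n+3 := by ring
    rw [e, pow_succ]
    have e2 : 2*n+3 = (2*n) + 3 := by ring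
    rw [e2, pow_add]
    field_simp
    ring
  rw [hfun] at h2
  convert h2 using 1
  · rfl
  simp [Finset.range_one]
  field_simp
  ring

end aux

/-- `F(c, x)` gives exactly the spatial part of the logarithm of a rigid body
motion `(x, exp (skew c))` in homogeneous coordinates:
`exp [[skew c, F(c,x)], [0, 0]] = [[exp (skew c), x], [0, 1]]` for `0 < ‖c‖ < 2π`. -/
theorem exp_blockMatrix_log (c : Fin 3 → ℝ) (hc0 : 0 < enorm3 c)
    (hc2 : enorm3 c < 2 * Real.pi) (x : Fin 3 → ℝ) :
    NormedSpace.exp (Matrix.fromBlocks (skew c) (Matrix.replicateCol (Fin 1) (F c x)) (0 : Matrix (Fin 1) (Fin 3) ℝ) (0 : Matrix (Fin 1) (Fin 1) ℝ)) =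
      Matrix.fromBlocks (NormedSpace.exp (skew c)) (Matrix.replicateCol (Fin 1) x) (0 : Matrix (Fin 1) (Fin 3) ℝ) (1 : Matrix (Fin 1) (Fin 1) ℝ) := by
  classical
  letI : NormedAddCommGroup (Matrix (Fin 3) (Fin 3) ℝ) := Matrix.linftyOpNormedAddCommGroup
  letI : NormedSpace ℝ (Matrix (Fin 3) (Fin 3) ℝ) := Matrix.linftyOpNormedSpace
  letI : NormedRing (Matrix (Fin 3) (Fin 3) ℝ) := Matrix.linftyOpNormedRing
  letI : NormedAlgebra ℝ (Matrix (Fin 3) (Fin 3) ℝ) := Matrix.linftyOpNormedAlgebra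
  letI : NormedAddCommGroup (Matrix (Fin 3) (Fin 1) ℝ) := Matrix.linftyOpNormedAddCommGroup
  letI : NormedSpace ℝ (Matrix (Fin 3) (Fin 1) ℝ) := Matrix.linftyOpNormedSpace
  letI : NormedAddCommGroup (Matrix (Fin 3 ⊕ Fin 1) (Fin 3 ⊕ Fin 1) ℝ) :=
    Matrix.linftyOpNormedAddCommGroup
  letI : NormedSpace ℝ (Matrix (Fin 3 ⊕ Fin 1) (Fin 3 ⊕ Fin 1) ℝ) := Matrix.linftyOpNormedSpace
  letI : NormedRing (Matrix (Fin 3 ⊕ Fin 1) (Fin 3 ⊕ Fin 1) ℝ) := Matrix.linftyOpNormedRing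
  letI : NormedAlgebra ℝ (Matrix (Fin 3 ⊕ Fin 1) (Fin 3 ⊕ Fin 1) ℝ) := Matrix.linftyOpNormedAlgebra
  set q : ℝ := enorm3 c with hqdef
  have hqne : q ≠ 0 := ne_of_gt hc0
  set S : Matrix (Fin 3) (Fin 3) ℝ := skew c with hSdef
  set β : ℝ := q⁻¹^2 * (1 - q/2 * (Real.cos (q/2)/Real.sin (q/2))) with hβdef
  set α : ℝ := (1 - Real.cos q)/q^2 with hαdef
  set γ : ℝ := (q - Real.sin q)/q^3 with hγdef
  -- the cube of S
  have hq2 : q^2 = c 0 ^ 2 + c 1 ^ 2 + c 2 ^ 2 := Real.sq_sqrt (by positivity)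
  have hS3 : S * S * S = (-q^2) • S := by
    rw [hq2]
    ext i j
    fin_cases i <;> fin_cases j <;>
      simp [hSdef, skew, Matrix.mul_apply, Fin.sum_univ_succ] <;> ring
  have h3r : S * (S * S) = (-q^2) • S := by rw [← Matrix.mul_assoc]; exact hS3
  have h4 : (S*S) * (S*S) = (-q^2) • (S*S) := by
    rw [← Matrix.mul_assoc, Matrix.mul_assoc S S S, h3r, smul_mul_assoc]
  -- powers of S
  have hodd : ∀ k : ℕ, S ^ (2*k+1) = ((-q^2)^k) • S := by
    intro k
    induction k with
    | zero => simp
    | succ k ih =>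
      have e : 2*(k+1)+1 = (2*k+1) + 2 := by ring
      rw [e, pow_add, ih, smul_mul_assoc, pow_two S, h3r, smul_smul, ← pow_succ]
  have heven : ∀ k : ℕ, S ^ (2*k+2) = ((-q^2)^k) • (S * S) := by
    intro k
    have e : 2*k+2 = (2*k+1) + 1 := by ring
    rw [e, pow_succ, hodd k, smul_mul_assoc]
  -- HasSum for exp S
  have hexpS : HasSum (fun n : ℕ => ((Nat.factorial n : ℝ))⁻¹ • S ^ n) (NormedSpace.exp S) := by
    rw [NormedSpace.exp_eq_tsum (𝕂 := ℝ)]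
    exact (NormedSpace.expSeries_summable' (𝕂 := ℝ) S).hasSum
  have hexpS1 : HasSum (fun n : ℕ => ((Nat.factorial (n+1) : ℝ))⁻¹ • S ^ (n+1)) (NormedSpace.exp S - 1) := by
    have h := (hasSum_nat_add_iff' (f := fun n : ℕ => ((Nat.factorial n : ℝ))⁻¹ • S ^ n) 1).mpr hexpS
    simpa using h
  -- HasSum for T := ∑ Sⁿ/(n+1)!
  have heS : HasSum (fun k : ℕ => ((Nat.factorial (2*k+2) : ℝ))⁻¹ • S ^ (2*k+1)) (α • S) := by
    have h := (hasSum_alpha hqne).smul_const S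
    rw [← hαdef] at h
    convert h using 2 with k
    rw [hodd k, smul_smul]
    congr 1
    rw [neg_pow, ← pow_mul]
    ring
  have hoS : HasSum (fun k : ℕ => ((Nat.factorial (2*k+3) : ℝ))⁻¹ • S ^ (2*k+2)) (γ • (S*S)) := by
    have h := (hasSum_gamma hqne).smul_const (S*S)
    rw [← hγdef] at h
    convert h using 2 with k
    rw [heven k, smul_smul]
    congr 1
    rw [neg_pow, ← pow_mul]
    ring
  have hT : HasSum (fun n : ℕ => ((Nat.factorial (n+1) : ℝ))⁻¹ • S ^ n) (1 + (α • S + γ • (S*S))) := by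
    have htail : HasSum (fun n : ℕ => ((Nat.factorial (n+2) : ℝ))⁻¹ • S ^ (n+1)) (α • S + γ • (S*S)) := by
      refine HasSum.even_add_odd ?_ ?_
      · exact heS
      · exact hoS
    have h := HasSum.zero_add (f := fun n : ℕ => ((Nat.factorial (n+1) : ℝ))⁻¹ • S ^ n) htail
    simpa using h
  -- the block matrices
  set V : Matrix (Fin 3) (Fin 1) ℝ := Matrix.replicateCol (Fin 1) (F c x) with hVdef
  set A : Matrix (Fin 3 ⊕ Fin 1) (Fin 3 ⊕ Fin 1) ℝ :=
    fromBlocks S V (0 : Matrix (Fin 1) (Fin 3) ℝ) (0 : Matrix (Fin 1) (Fin 1) ℝ) with hAdef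
  have hApow : ∀ n : ℕ, A ^ (n+1) = fromBlocks (S^(n+1)) (S^n * V) 0 0 := by
    intro n
    induction n with
    | zero => simp [hAdef]
    | succ n ih =>
      rw [pow_succ, ih, hAdef, Matrix.fromBlocks_multiply]
      simp [← pow_succ]
  -- linear maps for assembling blocks
  let L1 : Matrix (Fin 3) (Fin 3) ℝ →ₗ[ℝ] Matrix (Fin 3 ⊕ Fin 1) (Fin 3 ⊕ Fin 1) ℝ :=
    { toFun := fun M => fromBlocks M 0 0 0
      map_add' := fun M N => by ext (i|i) (j|j) <;> simp
      map_smul' := fun r M => by ext (i|i) (j|j) <;> simp }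
  let L2 : Matrix (Fin 3) (Fin 1) ℝ →ₗ[ℝ] Matrix (Fin 3 ⊕ Fin 1) (Fin 3 ⊕ Fin 1) ℝ :=
    { toFun := fun M => fromBlocks 0 M 0 0
      map_add' := fun M N => by ext (i|i) (j|j) <;> simp
      map_smul' := fun r M => by ext (i|i) (j|j) <;> simp }
  let L3 : Matrix (Fin 3) (Fin 3) ℝ →ₗ[ℝ] Matrix (Fin 3) (Fin 1) ℝ :=
    { toFun := fun M => M * V
      map_add' := fun M N => Matrix.add_mul M N V
      map_smul' := fun r M => Matrix.smul_mul r M V }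
  have hTV : HasSum (fun n : ℕ => ((Nat.factorial (n+1) : ℝ))⁻¹ • (S^n * V))
      ((1 + (α•S + γ•(S*S))) * V) := by
    have h := hT.mapL (LinearMap.toContinuousLinearMap L3)
    convert h using 1
    · rfl
    funext n
    simp [L3, smul_mul_assoc]
    rfl
  have htailA : HasSum (fun n : ℕ => ((Nat.factorial (n+1) : ℝ))⁻¹ • A^(n+1))
      (fromBlocks (NormedSpace.exp S - 1) ((1 + (α•S+γ•(S*S))) * V) 0 0) := by
    have h1 := hexpS1.mapL (LinearMap.toContinuousLinearMap L1)
    have h2 := hTV.mapL (LinearMap.toContinuousLinearMap L2)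
    have h3 := h1.add h2
    convert h3 using 1
    · rfl
    · funext n
      rw [hApow n]
      ext (i|i) (j|j) <;> simp [L1, L2]
    · ext (i|i) (j|j) <;> simp [L1, L2]
  have hexpA : NormedSpace.exp A
      = 1 + fromBlocks (NormedSpace.exp S - 1) ((1 + (α•S+γ•(S*S))) * V) 0 0 := by
    rw [NormedSpace.exp_eq_tsum (𝕂 := ℝ)]
    have h := HasSum.zero_add (f := fun n : ℕ => ((Nat.factorial n : ℝ))⁻¹ • A ^ n) htailA
    simpa using h.tsum_eq
  -- the key algebraic identity
  have e1 : α - 1/2 - α*β*q^2 + γ*q^2/2 = 0 := trig1 hc0 hc2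
  have e2 : β - α/2 + γ - γ*β*q^2 = 0 := trig2 hc0 hc2
  have key : (1 + (α•S + γ•(S*S))) *
      ((1 : Matrix (Fin 3) (Fin 3) ℝ) - (1/2 : ℝ) • S + β • (S*S)) = 1 := by
    have expand : (1 + (α•S + γ•(S*S))) *
        ((1 : Matrix (Fin 3) (Fin 3) ℝ) - (1/2 : ℝ) • S + β • (S*S))
        = 1 + (α - 1/2 - α*β*q^2 + γ*q^2/2) • S + (β - α/2 + γ - γ*β*q^2) • (S*S) := by
      simp only [mul_add, add_mul, mul_sub, sub_mul, one_mul, mul_one, smul_mul_assoc,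
        mul_smul_comm, smul_smul, hS3, h3r, h4]
      module
    rw [expand, e1, e2]
    simp
  have hVx : V = ((1 : Matrix (Fin 3) (Fin 3) ℝ) - (1/2 : ℝ) • S + β • (S*S)) *
      Matrix.replicateCol (Fin 1) x := by
    rw [hVdef, show F c x = (((1 : Matrix (Fin 3) (Fin 3) ℝ) - (1/2:ℝ) • S + β • (S*S))) *ᵥ x
      from rfl]
    exact Matrix.replicateCol_mulVec _ _
  have hfinal : (1 + (α•S + γ•(S*S))) * V = Matrix.replicateCol (Fin 1) x := by
    rw [hVx, ← Matrix.mul_assoc, key, Matrix.one_mul]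
  rw [hexpA, hfinal]
  ext (i|i) (j|j) <;>
    simp [Matrix.add_apply, Matrix.one_apply, Matrix.fromBlocks, Sum.elim_inl, Sum.elim_inr]
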